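/- Let k be a positive odd integer, s >= 0 an integer, t = s + (k+1)/2 (so k <= 2t-1), and n >= (s+1)(t+1) + k = ((t+1)(2t+1) - k(t-1))/2, and let Q be a partition of {k+1, ..., n} into s+1 sets each of size at least t+1. Then inst(b_t^k(Q)) = 2t+1. -/

import Mathlib

open Finset

/-- The number of entries of a point of the hypercube equal to `1` (`true`). -/
def onesCount {n : ℕ} (x : Fin n → Bool) : ℕ :=
  (univ.filter fun i => x i = true).card

/-- The number of entries of a point of the hypercube equal to `0` (`false`). -/
def zerosCount {n : ℕ} (x : Fin n → Bool) : ℕ :=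
  (univ.filter fun i => x i = false).card

/-- `P` is a geodesic in the `n`-hypercube: consecutive points differ in exactly one
entry, and each of the `n` entries changes at exactly one step. -/
def IsGeodesic {n : ℕ} (P : Fin (n+1) → Fin n → Bool) : Prop :=
  ∃ σ : Equiv.Perm (Fin n), ∀ j : Fin n, ∀ ℓ : Fin n,
    P j.succ ℓ = if σ ℓ = j then !(P j.castSucc ℓ) else P j.castSucc ℓ

/-- The number of jumps of the geodesic `P` in the colouring `f`. -/
def jumps {n : ℕ} (f : (Fin n → Bool) → Bool) (P : Fin (n+1) → Fin n → Bool) : ℕ :=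
  (univ.filter fun j : Fin n => f (P j.succ) ≠ f (P j.castSucc)).card

/-- `inst f` is the maximum of `jumps f P` over all geodesics `P`. -/
noncomputable def inst {n : ℕ} (f : (Fin n → Bool) → Bool) : ℕ :=
  sSup {m | ∃ P : Fin (n+1) → Fin n → Bool, IsGeodesic P ∧ m = jumps f P}

/-- The number of `1`s among the first `k` entries of `x`. -/
def firstOnes {n : ℕ} (k : ℕ) (x : Fin n → Bool) : ℕ :=
  (univ.filter fun i : Fin n => i.val < k ∧ x i = true).card

/-- The colouring `b_t^k(Q)`: if the majority of the first `k` entries is `1` it is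
`a^Q_0` (colour `0` iff some set of `Q` is all `0`), and if the majority of the first
`k` entries is `0` it is `a^Q_1` (colour `1` iff some set of `Q` is all `1`). -/
def bCol {n : ℕ} (k : ℕ) (Q : Finset (Finset (Fin n))) (x : Fin n → Bool) : Bool :=
  if k < 2 * firstOnes k x then
    (if ∃ S ∈ Q, ∀ i ∈ S, x i = false then false else true)
  else
    (if ∃ S ∈ Q, ∀ i ∈ S, x i = true then true else false)

/-! ### state machinery -/

/-- The point of the geodesic determined by start `x0` and flip-order `σ` at time `m`. -/
def state {n : ℕ} (x0 : Fin n → Bool) (σ : Equiv.Perm (Fin n)) (m : ℕ) : Fin n → Bool :=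
  fun ℓ => if (σ ℓ).val < m then !(x0 ℓ) else x0 ℓ

lemma geodesic_state {n : ℕ} {P : Fin (n+1) → Fin n → Bool} {σ : Equiv.Perm (Fin n)}
    (h : ∀ j : Fin n, ∀ ℓ : Fin n,
      P j.succ ℓ = if σ ℓ = j then !(P j.castSucc ℓ) else P j.castSucc ℓ) :
    ∀ j : Fin (n+1), P j = state (P 0) σ j.val := by
  intro j
  obtain ⟨m, hm⟩ := j
  induction m with
  | zero => funext ℓ; simp [state]
  | succ m ih =>
    have hmn : m < n := by omega
    have hm' : m < n + 1 := by omega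
    have hstep := h ⟨m, hmn⟩
    have hsucc : (⟨m+1, hm⟩ : Fin (n+1)) = (Fin.succ ⟨m, hmn⟩) := rfl
    have hcast : (⟨m, hm'⟩ : Fin (n+1)) = (Fin.castSucc ⟨m, hmn⟩) := rfl
    funext ℓ
    have ihℓ := congrFun (ih hm') ℓ
    rw [hsucc, hstep ℓ, ← hcast, ihℓ]
    by_cases hσ : σ ℓ = ⟨m, hmn⟩
    · have hv : (σ ℓ).val = m := by rw [hσ]
      simp [state, hσ, hv]
    · have hv : (σ ℓ).val ≠ m := fun hc => hσ (Fin.ext hc)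
      have h2 : ((σ ℓ).val < m + 1) ↔ ((σ ℓ).val < m) := by omega
      simp [state, hσ, h2]

/-- The change-steps of a time-indexed boolean `u` (as a finset of `Fin n`). -/
def chg (n : ℕ) (u : ℕ → Bool) : Finset (Fin n) :=
  univ.filter fun j : Fin n => u (j.val+1) ≠ u j.val

lemma jumps_eq_chg {n : ℕ} (f : (Fin n → Bool) → Bool) (P : Fin (n+1) → Fin n → Bool)
    {σ : Equiv.Perm (Fin n)}
    (h : ∀ j : Fin n, ∀ ℓ : Fin n,
      P j.succ ℓ = if σ ℓ = j then !(P j.castSucc ℓ) else P j.castSucc ℓ) :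
    jumps f P = (chg n (fun m => f (state (P 0) σ m))).card := by
  unfold jumps chg
  congr 1
  apply filter_congr
  intro j _
  have h1 := geodesic_state h j.succ
  have h2 := geodesic_state h j.castSucc
  rw [h1, h2]
  simp [Fin.val_succ, Fin.coe_castSucc]

lemma chg_card_le_two_mul {n : ℕ} {u : ℕ → Bool} {a b : ℕ}
    (hu : ∀ m, m ≤ n → (u m = true ↔ (a ≤ m ∧ m ≤ b))) :
    (chg n u) ⊆ (univ.filter fun j : Fin n => j.val + 1 = a) ∪
      (univ.filter fun j : Fin n => j.val = b) := by
  intro j hj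
  simp only [chg, mem_filter, mem_univ, true_and] at hj
  have hja : j.val + 1 ≤ n := j.isLt
  have h1 := hu (j.val+1) hja
  have h2 := hu j.val (le_of_lt j.isLt)
  simp only [mem_union, mem_filter, mem_univ, true_and]
  by_contra hcon
  push_neg at hcon
  apply hj
  rw [Bool.eq_iff_iff, h1, h2]
  omega

lemma card_filter_val_eq {n c : ℕ} : (univ.filter fun j : Fin n => j.val = c).card ≤ 1 := by
  apply Finset.card_le_one.mpr
  intro a ha b hb
  simp only [mem_filter] at ha hb
  exact Fin.ext (ha.2.trans hb.2.symm)

lemma card_filter_val_add_one_eq {n c : ℕ} :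
    (univ.filter fun j : Fin n => j.val + 1 = c).card ≤ 1 := by
  apply Finset.card_le_one.mpr
  intro a ha b hb
  simp only [mem_filter] at ha hb
  exact Fin.ext (by omega)
section IntervalHelpers
variable {n : ℕ} {u : ℕ → Bool} {a b : ℕ}

lemma chg_mem_arith (hu : ∀ m, m ≤ n → (u m = true ↔ (a ≤ m ∧ m ≤ b)))
    {j : Fin n} (hj : j ∈ chg n u) :
    ((a ≤ j.val + 1 ∧ j.val + 1 ≤ b) ↔ (a ≤ j.val ∧ j.val ≤ b)) → False := by
  intro hiff
  simp only [chg, mem_filter, mem_univ, true_and] at hj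
  exact hj (by rw [Bool.eq_iff_iff, hu _ j.isLt, hu _ (le_of_lt j.isLt)]; exact hiff)

lemma chg_card_le_two (hu : ∀ m, m ≤ n → (u m = true ↔ (a ≤ m ∧ m ≤ b))) :
    (chg n u).card ≤ 2 := by
  have hsub : chg n u ⊆ (univ.filter fun j : Fin n => j.val + 1 = a) ∪
      (univ.filter fun j : Fin n => j.val = b) := by
    intro j hj
    simp only [mem_union, mem_filter, mem_univ, true_and]
    by_contra hc
    push_neg at hc
    exact chg_mem_arith hu hj (by omega)
  calc (chg n u).card ≤ _ := card_le_card hsub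
    _ ≤ _ + _ := card_union_le _ _
    _ ≤ 1 + 1 := by
        gcongr
        · exact Finset.card_le_one.mpr fun x hx y hy => Fin.ext (by
            simp only [mem_filter] at hx hy; omega)
        · exact Finset.card_le_one.mpr fun x hx y hy => Fin.ext (by
            simp only [mem_filter] at hx hy; omega)

lemma chg_card_empty (hu : ∀ m, m ≤ n → (u m = true ↔ (a ≤ m ∧ m ≤ b)))
    (hba : b < a) : (chg n u).card = 0 := by
  rw [Finset.card_eq_zero, Finset.eq_empty_iff_forall_notMem]
  intro j hj
  exact chg_mem_arith hu hj (by omega)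

lemma chg_card_le_one_left (hu : ∀ m, m ≤ n → (u m = true ↔ (a ≤ m ∧ m ≤ b)))
    (ha : a = 0) : (chg n u).card ≤ 1 := by
  have hsub : chg n u ⊆ (univ.filter fun j : Fin n => j.val = b) := by
    intro j hj
    simp only [mem_filter, mem_univ, true_and]
    by_contra hc
    exact chg_mem_arith hu hj (by omega)
  calc (chg n u).card ≤ _ := card_le_card hsub
    _ ≤ 1 := Finset.card_le_one.mpr fun x hx y hy => Fin.ext (by
        simp only [mem_filter] at hx hy; omega)

lemma chg_card_le_one_right (hu : ∀ m, m ≤ n → (u m = true ↔ (a ≤ m ∧ m ≤ b)))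
    (hb : n ≤ b) : (chg n u).card ≤ 1 := by
  have hsub : chg n u ⊆ (univ.filter fun j : Fin n => j.val + 1 = a) := by
    intro j hj
    simp only [mem_filter, mem_univ, true_and]
    by_contra hc
    have := j.isLt
    exact chg_mem_arith hu hj (by omega)
  calc (chg n u).card ≤ _ := card_le_card hsub
    _ ≤ 1 := Finset.card_le_one.mpr fun x hx y hy => Fin.ext (by
        simp only [mem_filter] at hx hy; omega)

end IntervalHelpers

section PerPart
variable {n : ℕ} (x0 : Fin n → Bool) (σ : Equiv.Perm (Fin n)) (S : Finset (Fin n))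

/-- left endpoint of the all-`false` interval of `S`. -/
def aZ : ℕ := (S.filter fun ℓ => x0 ℓ = true).sup fun ℓ => (σ ℓ).val + 1
/-- right endpoint of the all-`false` interval of `S`. -/
def bZ : ℕ := n - ((S.filter fun ℓ => x0 ℓ = false).sup fun ℓ => n - (σ ℓ).val)
/-- left endpoint of the all-`true` interval of `S`. -/
def aO : ℕ := (S.filter fun ℓ => x0 ℓ = false).sup fun ℓ => (σ ℓ).val + 1
/-- right endpoint of the all-`true` interval of `S`. -/
def bO : ℕ := n - ((S.filter fun ℓ => x0 ℓ = true).sup fun ℓ => n - (σ ℓ).val)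

lemma state_false_iff (m : ℕ) (ℓ : Fin n) :
    state x0 σ m ℓ = false ↔
      ((x0 ℓ = true ∧ (σ ℓ).val < m) ∨ (x0 ℓ = false ∧ ¬ (σ ℓ).val < m)) := by
  unfold state
  cases h : x0 ℓ <;> by_cases hc : (σ ℓ).val < m <;> simp [h, hc]

lemma allFalse_iff (m : ℕ) (hm : m ≤ n) :
    (∀ ℓ ∈ S, state x0 σ m ℓ = false) ↔ (aZ x0 σ S ≤ m ∧ m ≤ bZ x0 σ S) := by
  have hsupF : ((S.filter fun ℓ => x0 ℓ = false).sup fun ℓ => n - (σ ℓ).val) ≤ n :=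
    Finset.sup_le fun ℓ _ => by omega
  constructor
  · intro h
    constructor
    · apply Finset.sup_le
      intro ℓ hℓ
      simp only [mem_filter] at hℓ
      have := (state_false_iff x0 σ m ℓ).mp (h ℓ hℓ.1)
      rcases this with ⟨_, h2⟩ | ⟨h1, _⟩
      · omega
      · rw [hℓ.2] at h1; exact absurd h1 (by simp)
    · have hs : ((S.filter fun ℓ => x0 ℓ = false).sup fun ℓ => n - (σ ℓ).val) ≤ n - m := by
        apply Finset.sup_le
        intro ℓ hℓ
        simp only [mem_filter] at hℓ
        have := (state_false_iff x0 σ m ℓ).mp (h ℓ hℓ.1)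
        have hlt := (σ ℓ).isLt
        rcases this with ⟨h1, _⟩ | ⟨_, h2⟩
        · rw [hℓ.2] at h1; exact absurd h1 (by simp)
        · omega
      unfold bZ
      omega
  · rintro ⟨h1, h2⟩ ℓ hℓ
    rw [state_false_iff]
    cases hx : x0 ℓ
    · right
      refine ⟨rfl, ?_⟩
      have hmem : ℓ ∈ S.filter fun ℓ => x0 ℓ = false := by
        simp only [mem_filter]; exact ⟨hℓ, hx⟩
      have h5 : n - (σ ℓ).val ≤ ((S.filter fun ℓ => x0 ℓ = false).sup fun ℓ => n - (σ ℓ).val) := by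
        simpa using Finset.le_sup (f := fun ℓ => n - (σ ℓ).val) hmem
      have hlt := (σ ℓ).isLt
      unfold bZ at h2
      omega
    · left
      refine ⟨rfl, ?_⟩
      have hmem : ℓ ∈ S.filter fun ℓ => x0 ℓ = true := by
        simp only [mem_filter]; exact ⟨hℓ, hx⟩
      have h5 : (σ ℓ).val + 1 ≤ ((S.filter fun ℓ => x0 ℓ = true).sup fun ℓ => (σ ℓ).val + 1) := by
        simpa using Finset.le_sup (f := fun ℓ => (σ ℓ).val + 1) hmem
      unfold aZ at h1
      omega

lemma state_not (m : ℕ) (ℓ : Fin n) :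
    state (fun i => !(x0 i)) σ m ℓ = !(state x0 σ m ℓ) := by
  unfold state; split <;> simp

lemma allTrue_iff (m : ℕ) (hm : m ≤ n) :
    (∀ ℓ ∈ S, state x0 σ m ℓ = true) ↔ (aO x0 σ S ≤ m ∧ m ≤ bO x0 σ S) := by
  have h := allFalse_iff (fun i => !(x0 i)) σ S m hm
  have heq : ∀ ℓ ∈ S, (state (fun i => !(x0 i)) σ m ℓ = false ↔ state x0 σ m ℓ = true) := by
    intro ℓ _
    rw [state_not]
    cases state x0 σ m ℓ <;> simp
  rw [forall_congr' (fun ℓ => imp_congr_right fun hℓ => heq ℓ hℓ)] at h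
  rw [h]
  have h1 : aZ (fun i => !(x0 i)) σ S = aO x0 σ S := by
    unfold aZ aO
    congr 1
    apply filter_congr
    intro ℓ _
    cases hx : x0 ℓ <;> simp [hx]
  have h2 : bZ (fun i => !(x0 i)) σ S = bO x0 σ S := by
    unfold bZ bO
    congr 2
    apply filter_congr
    intro ℓ _
    cases hx : x0 ℓ <;> simp [hx]
  rw [h1, h2]

lemma per_part (hS : S.Nonempty) :
    (chg n fun m => decide (∀ ℓ ∈ S, state x0 σ m ℓ = false)).card +
    (chg n fun m => decide (∀ ℓ ∈ S, state x0 σ m ℓ = true)).card ≤ 2 := by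
  have hu0 : ∀ m, m ≤ n → ((decide (∀ ℓ ∈ S, state x0 σ m ℓ = false) : Bool) = true ↔
      (aZ x0 σ S ≤ m ∧ m ≤ bZ x0 σ S)) := by
    intro m hm; rw [decide_eq_true_eq]; exact allFalse_iff x0 σ S m hm
  have hu1 : ∀ m, m ≤ n → ((decide (∀ ℓ ∈ S, state x0 σ m ℓ = true) : Bool) = true ↔
      (aO x0 σ S ≤ m ∧ m ≤ bO x0 σ S)) := by
    intro m hm; rw [decide_eq_true_eq]; exact allTrue_iff x0 σ S m hm
  by_cases hT : (S.filter fun ℓ => x0 ℓ = true).Nonempty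
  · by_cases hF : (S.filter fun ℓ => x0 ℓ = false).Nonempty
    · -- both nonempty: at most one interval is nonempty
      by_cases hZ : aZ x0 σ S ≤ bZ x0 σ S
      · -- then all-true interval empty
        have hOempty : bO x0 σ S < aO x0 σ S := by
          obtain ⟨ℓ1, hℓ1, hsup⟩ := Finset.exists_mem_eq_sup _ hT fun ℓ => (σ ℓ).val + 1
          obtain ⟨ℓ0, hℓ0⟩ := hF
          have h1 : bO x0 σ S ≤ (σ ℓ1).val := by
            have h5 : n - (σ ℓ1).val ≤ ((S.filter fun ℓ => x0 ℓ = true).sup fun ℓ => n - (σ ℓ).val) := by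
              simpa using Finset.le_sup (f := fun ℓ => n - (σ ℓ).val) hℓ1
            have := (σ ℓ1).isLt
            unfold bO; omega
          have h2 : aZ x0 σ S = (σ ℓ1).val + 1 := hsup
          have h3 : bZ x0 σ S ≤ (σ ℓ0).val := by
            have h5 : n - (σ ℓ0).val ≤ ((S.filter fun ℓ => x0 ℓ = false).sup fun ℓ => n - (σ ℓ).val) := by
              simpa using Finset.le_sup (f := fun ℓ => n - (σ ℓ).val) hℓ0
            have := (σ ℓ0).isLt
            unfold bZ; omega
          have h4 : (σ ℓ0).val + 1 ≤ aO x0 σ S := by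
            simpa [aO] using Finset.le_sup (f := fun ℓ => (σ ℓ).val + 1) hℓ0
          omega
        have := chg_card_empty hu1 hOempty
        have := chg_card_le_two hu0
        omega
      · have := chg_card_empty hu0 (by omega)
        have := chg_card_le_two hu1
        omega
    · -- no false entries: S is all-true at time 0
      rw [Finset.not_nonempty_iff_eq_empty] at hF
      have ha0 : aO x0 σ S = 0 := by unfold aO; rw [hF]; rfl
      have hbn : n ≤ bZ x0 σ S := by unfold bZ; rw [hF]; simp
      have := chg_card_le_one_right hu0 hbn
      have := chg_card_le_one_left hu1 ha0
      omega
  · -- no true entries: S is all-false at time 0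
    rw [Finset.not_nonempty_iff_eq_empty] at hT
    have ha0 : aZ x0 σ S = 0 := by unfold aZ; rw [hT]; rfl
    have hbn : n ≤ bO x0 σ S := by unfold bO; rw [hT]; simp
    have := chg_card_le_one_left hu0 ha0
    have := chg_card_le_one_right hu1 hbn
    omega

end PerPart
lemma bCol_eq {n : ℕ} (k : ℕ) (Q : Finset (Finset (Fin n))) (x : Fin n → Bool) :
    bCol k Q x = if (decide (k < 2 * firstOnes k x)) = true
      then !(decide (∃ S ∈ Q, ∀ i ∈ S, x i = false))
      else decide (∃ S ∈ Q, ∀ i ∈ S, x i = true) := by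
  unfold bCol
  by_cases h1 : k < 2 * firstOnes k x <;>
    by_cases h2 : ∃ S ∈ Q, ∀ i ∈ S, x i = false <;>
      by_cases h3 : ∃ S ∈ Q, ∀ i ∈ S, x i = true <;>
        simp [h1, h2, h3]

lemma chg_subset_three {n : ℕ} {g M A0 A1 : ℕ → Bool}
    (h : ∀ m, g m = if M m = true then !(A0 m) else A1 m) :
    chg n g ⊆ (chg n M ∪ chg n A0) ∪ chg n A1 := by
  intro j hj
  simp only [chg, mem_filter, mem_univ, true_and, mem_union] at hj ⊢
  by_contra hc
  push_neg at hc
  obtain ⟨⟨hM, hA0⟩, hA1⟩ := hc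
  exact hj (by rw [h, h, hM, hA0, hA1])

lemma chg_exists_subset {n : ℕ} {Q : Finset (Finset (Fin n))} {v : Finset (Fin n) → ℕ → Bool} :
    chg n (fun m => decide (∃ S ∈ Q, v S m = true)) ⊆ Q.biUnion fun S => chg n (v S) := by
  intro j hj
  simp only [chg, mem_filter, mem_univ, true_and, mem_biUnion] at hj ⊢
  by_contra hc
  push_neg at hc
  apply hj
  apply decide_eq_decide.mpr
  constructor
  · rintro ⟨S, hS, hv⟩; exact ⟨S, hS, (hc S hS).symm ▸ hv⟩
  · rintro ⟨S, hS, hv⟩; exact ⟨S, hS, (hc S hS) ▸ hv⟩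

lemma chg_majority_le {n k : ℕ} (x0 : Fin n → Bool) (σ : Equiv.Perm (Fin n)) :
    (chg n fun m => decide (k < 2 * firstOnes k (state x0 σ m))).card ≤ k := by
  have hsub : (chg n fun m => decide (k < 2 * firstOnes k (state x0 σ m))) ⊆
      (univ.filter fun i : Fin n => i.val < k).image σ := by
    intro j hj
    simp only [chg, mem_filter, mem_univ, true_and] at hj
    have : ∃ i : Fin n, i.val < k ∧ state x0 σ (j.val+1) i ≠ state x0 σ j.val i := by
      by_contra hc
      push_neg at hc
      apply hj
      apply decide_eq_decide.mpr
      have : firstOnes k (state x0 σ (j.val+1)) = firstOnes k (state x0 σ j.val) := by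
        unfold firstOnes
        congr 1
        apply filter_congr
        intro i _
        constructor
        · rintro ⟨h1, h2⟩; exact ⟨h1, (hc i h1) ▸ h2⟩
        · rintro ⟨h1, h2⟩; exact ⟨h1, (hc i h1).symm ▸ h2⟩
      rw [this]
    obtain ⟨i, hik, hne⟩ := this
    have hσ : (σ i).val = j.val := by
      by_contra hc
      apply hne
      unfold state
      rcases Nat.lt_or_ge (σ i).val j.val with hlt | hge
      · simp [hlt, Nat.lt_succ_of_lt hlt]
      · have h1 : ¬ (σ i).val < j.val := by omega
        have h2 : ¬ (σ i).val < j.val + 1 := by omega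
        simp [h1, h2]
    have : σ i = j := Fin.ext hσ
    simp only [mem_image, mem_filter, mem_univ, true_and]
    exact ⟨i, hik, this⟩
  calc _ ≤ _ := card_le_card hsub
    _ ≤ (univ.filter fun i : Fin n => i.val < k).card := card_image_le
    _ ≤ (Finset.range k).card := by
        apply card_le_card_of_injOn Fin.val
        · intro i hi; simp at hi; simp [hi]
        · intro a _ b _ hab; exact Fin.ext hab
    _ = k := by simp

lemma jumps_le_bound {n k s : ℕ} (Q : Finset (Finset (Fin n))) (hQcard : Q.card = s + 1)
    (hQne : ∀ S ∈ Q, S.Nonempty)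
    {P : Fin (n+1) → Fin n → Bool} (σ : Equiv.Perm (Fin n))
    (h : ∀ j : Fin n, ∀ ℓ : Fin n,
      P j.succ ℓ = if σ ℓ = j then !(P j.castSucc ℓ) else P j.castSucc ℓ) :
    jumps (bCol k Q) P ≤ k + 2 * (s + 1) := by
  classical
  rw [jumps_eq_chg (bCol k Q) P h]
  set x0 := P 0 with hx0
  set v0 : Finset (Fin n) → ℕ → Bool :=
    fun S m => decide (∀ i ∈ S, state x0 σ m i = false) with hv0
  set v1 : Finset (Fin n) → ℕ → Bool :=
    fun S m => decide (∀ i ∈ S, state x0 σ m i = true) with hv1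
  set M : ℕ → Bool := fun m => decide (k < 2 * firstOnes k (state x0 σ m)) with hM
  set A0 : ℕ → Bool := fun m => decide (∃ S ∈ Q, v0 S m = true) with hA0
  set A1 : ℕ → Bool := fun m => decide (∃ S ∈ Q, v1 S m = true) with hA1
  have hg : ∀ m, bCol k Q (state x0 σ m) = if M m = true then !(A0 m) else A1 m := by
    intro m
    rw [bCol_eq]
    have e0 : (decide (∃ S ∈ Q, ∀ i ∈ S, state x0 σ m i = false)) = A0 m := by
      apply decide_eq_decide.mpr
      simp [hv0]
    have e1 : (decide (∃ S ∈ Q, ∀ i ∈ S, state x0 σ m i = true)) = A1 m := by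
      apply decide_eq_decide.mpr
      simp [hv1]
    rw [e0, e1]
  have hsub := chg_subset_three (n := n) hg
  have hcard : (chg n fun m => bCol k Q (state x0 σ m)).card ≤
      (chg n M).card + (chg n A0).card + (chg n A1).card := by
    calc (chg n fun m => bCol k Q (state x0 σ m)).card
        ≤ ((chg n M ∪ chg n A0) ∪ chg n A1).card := card_le_card hsub
      _ ≤ (chg n M ∪ chg n A0).card + (chg n A1).card := card_union_le _ _
      _ ≤ (chg n M).card + (chg n A0).card + (chg n A1).card := by
          have := card_union_le (chg n M) (chg n A0); omega
  have hMle : (chg n M).card ≤ k := chg_majority_le x0 σ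
  have hA0le : (chg n A0).card ≤ ∑ S ∈ Q, (chg n (v0 S)).card :=
    le_trans (card_le_card chg_exists_subset) (card_biUnion_le)
  have hA1le : (chg n A1).card ≤ ∑ S ∈ Q, (chg n (v1 S)).card :=
    le_trans (card_le_card chg_exists_subset) (card_biUnion_le)
  have hsum : (∑ S ∈ Q, (chg n (v0 S)).card) + (∑ S ∈ Q, (chg n (v1 S)).card) ≤ 2 * (s+1) := by
    rw [← Finset.sum_add_distrib]
    calc (∑ S ∈ Q, ((chg n (v0 S)).card + (chg n (v1 S)).card)) ≤ ∑ _S ∈ Q, 2 :=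
          Finset.sum_le_sum fun S hS => per_part x0 σ S (hQne S hS)
      _ = 2 * (s + 1) := by rw [Finset.sum_const, hQcard]; ring
  omega
lemma exists_perm_extend {α : Type*} [Fintype α] [DecidableEq α] (D : Finset α) (φ : α → α)
    (hinj : Set.InjOn φ D) :
    ∃ σ : Equiv.Perm α, (∀ x ∈ D, σ x = φ x) ∧ (∀ x, x ∉ D → σ x ∉ D.image φ) := by
  classical
  set E := D.image φ with hE
  have hcard : E.card = D.card := Finset.card_image_of_injOn hinj
  have hcc : Dᶜ.card = Eᶜ.card := by
    rw [Finset.card_compl, Finset.card_compl, hcard]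
  let ψ := Finset.equivOfCardEq hcc
  let f : α → α := fun x => if h : x ∈ D then φ x else (ψ ⟨x, by simp [h]⟩ : α)
  have hfD : ∀ x ∈ D, f x = φ x := by intro x hx; simp only [f, dif_pos hx]
  have hfE : ∀ x, x ∉ D → f x ∉ E := by
    intro x hx
    simp only [f, dif_neg hx]
    have := (ψ ⟨x, by simp [hx]⟩).2
    simp only [Finset.mem_compl] at this
    exact this
  have hfinj : Function.Injective f := by
    intro a b hab
    by_cases ha : a ∈ D <;> by_cases hb : b ∈ D
    · exact hinj ha hb (by rwa [hfD a ha, hfD b hb] at hab)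
    · exfalso
      apply hfE b hb
      rw [← hab, hfD a ha]
      exact Finset.mem_image_of_mem φ ha
    · exfalso
      apply hfE a ha
      rw [hab, hfD b hb]
      exact Finset.mem_image_of_mem φ hb
    · have h1 : ψ ⟨a, by simp [ha]⟩ = ψ ⟨b, by simp [hb]⟩ :=
        Subtype.ext (by simpa only [f, dif_neg ha, dif_neg hb] using hab)
      have h2 := ψ.injective h1
      exact congrArg Subtype.val h2
  refine ⟨Equiv.ofBijective f ((Finite.injective_iff_bijective).mp hfinj), ?_, ?_⟩
  · intro x hx
    exact hfD x hx
  · intro x hx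
    exact hfE x hx

lemma card_filter_val_lt {n k : ℕ} (h : k ≤ n) :
    ((univ : Finset (Fin n)).filter fun i => i.val < k).card = k := by
  rw [← Finset.card_range k]
  apply Finset.card_bij (fun i _ => i.val)
  · intro a ha; simp only [mem_filter, mem_univ, true_and] at ha; simpa using ha
  · intro a _ b _ hab; exact Fin.ext hab
  · intro b hb
    simp only [Finset.mem_range] at hb
    exact ⟨⟨b, by omega⟩, by simp [hb], rfl⟩

lemma count_arith (k : ℕ) : ∀ m : ℕ,
    ((Finset.range k).filter fun i => (i < m ∧ i % 2 = 0) ∨ (m ≤ i ∧ i % 2 = 1)).card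
      = k / 2 + (min m k) % 2 := by
  induction k with
  | zero => simp
  | succ k ih =>
    intro m
    rw [Finset.range_add_one, Finset.filter_insert]
    by_cases hp : (k < m ∧ k % 2 = 0) ∨ (m ≤ k ∧ k % 2 = 1)
    · rw [if_pos hp, Finset.card_insert_of_notMem (by simp), ih]
      omega
    · rw [if_neg hp, ih]
      omega

lemma exists_geodesic_max {n k s t : ℕ} (hodd : Odd k) (hk : 0 < k)
    (ht : t = s + (k + 1) / 2) (hn : (s + 1) * (t + 1) + k ≤ n)
    (Q : Finset (Finset (Fin n))) (hQcard : Q.card = s + 1)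
    (hQsize : ∀ S ∈ Q, t + 1 ≤ S.card)
    (hQdisj : ∀ S ∈ Q, ∀ T ∈ Q, S ≠ T → Disjoint S T)
    (hQcover : Q.biUnion id = univ.filter fun i : Fin n => k ≤ i.val) :
    ∃ P : Fin (n+1) → Fin n → Bool, IsGeodesic P ∧ k + 2*s + 2 ≤ jumps (bCol k Q) P := by
  classical
  obtain ⟨c, hc⟩ := hodd
  have htc : t = s + c + 1 := by omega
  have hn2 : k + 2*s + 2 ≤ n := by
    have h1 : 2 ≤ t + 1 := by omega
    have h2 : (s+1) * 2 ≤ (s+1) * (t+1) := Nat.mul_le_mul_left _ h1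
    omega
  have hn0 : 0 < n := by omega
  haveI : Nonempty (Fin n) := ⟨⟨0, hn0⟩⟩
  -- the part containing a coordinate
  have hpartex : ∀ x : Fin n, k ≤ x.val → ∃ S, S ∈ Q ∧ x ∈ S := by
    intro x hx
    have : x ∈ Q.biUnion id := by rw [hQcover]; simp [hx]
    simpa using this
  choose! pt hpt1 hpt2 using hpartex
  have hSk : ∀ S ∈ Q, ∀ x ∈ S, k ≤ x.val := by
    intro S hS x hx
    have : x ∈ Q.biUnion id := mem_biUnion.mpr ⟨S, hS, hx⟩
    rw [hQcover] at this
    simpa using this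
  have hptu : ∀ S ∈ Q, ∀ x ∈ S, pt x = S := by
    intro S hS x hx
    have hkx := hSk S hS x hx
    by_contra hne
    exact absurd hx (Finset.disjoint_left.mp (hQdisj _ (hpt1 x hkx) _ hS hne) (hpt2 x hkx))
  -- two chosen points in each part
  have hpairex : ∀ S : Finset (Fin n), S ∈ Q → ∃ p : Fin n × Fin n, p.1 ∈ S ∧ p.2 ∈ S ∧ p.1 ≠ p.2 := by
    intro S hS
    have h1 : 1 < S.card := lt_of_lt_of_le (by omega) (hQsize S hS)
    obtain ⟨a, ha, b, hb, hab⟩ := Finset.one_lt_card.mp h1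
    exact ⟨(a, b), ha, hb, hab⟩
  choose! zw hz hw hzw using hpairex
  -- index of each part
  set e := Q.equivFin with he
  set J : Finset (Fin n) → ℕ := fun S => if hS : S ∈ Q then (e ⟨S, hS⟩).val else 0 with hJ
  have hJle : ∀ S, J S ≤ s := by
    intro S
    simp only [hJ]
    split
    · have h1 := (e ⟨S, ‹_›⟩).isLt
      have h2 : (e ⟨S, ‹_›⟩).val < s + 1 := by rw [← hQcard]; exact h1
      omega
    · omega
  have hJinj : ∀ S ∈ Q, ∀ T ∈ Q, J S = J T → S = T := by
    intro S hS T hT hJeq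
    simp only [hJ, dif_pos hS, dif_pos hT] at hJeq
    exact congrArg Subtype.val (e.injective (Fin.ext hJeq))
  have hJsurj : ∀ j : ℕ, j ≤ s → ∃ S ∈ Q, J S = j := by
    intro j hj
    have hjlt : j < Q.card := by rw [hQcard]; omega
    refine ⟨(e.symm ⟨j, hjlt⟩).val, (e.symm ⟨j, hjlt⟩).2, ?_⟩
    simp only [hJ, dif_pos (e.symm ⟨j, hjlt⟩).2]
    have h1 : (⟨(e.symm ⟨j, hjlt⟩).val, (e.symm ⟨j, hjlt⟩).2⟩ : {x // x ∈ Q}) = e.symm ⟨j, hjlt⟩ :=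
      Subtype.ext rfl
    rw [h1, Equiv.apply_symm_apply]
  -- the flip order on the distinguished coordinates, and the starting point
  set D : Finset (Fin n) := (univ.filter fun i : Fin n => i.val < k) ∪
      Q.biUnion (fun S => {(zw S).1, (zw S).2}) with hD
  set φ : Fin n → Fin n := fun x =>
    if x.val < k then x
    else if x = (zw (pt x)).1 then ⟨k + 2 * J (pt x), by have := hJle (pt x); omega⟩
    else if x = (zw (pt x)).2 then ⟨k + 2 * J (pt x) + 1, by have := hJle (pt x); omega⟩
    else x with hφ
  set x0 : Fin n → Bool := fun i =>
    if i.val < k then decide (i.val % 2 = 1) else decide (i = (zw (pt i)).1) with hx0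
  have hzk : ∀ S ∈ Q, ¬ (zw S).1.val < k := by
    intro S hS
    have := hSk S hS _ (hz S hS); omega
  have hwk : ∀ S ∈ Q, ¬ (zw S).2.val < k := by
    intro S hS
    have := hSk S hS _ (hw S hS); omega
  have hptz : ∀ S ∈ Q, pt (zw S).1 = S := fun S hS => hptu S hS _ (hz S hS)
  have hptw : ∀ S ∈ Q, pt (zw S).2 = S := fun S hS => hptu S hS _ (hw S hS)
  have hφz : ∀ S ∈ Q, (φ (zw S).1).val = k + 2 * J S := by
    intro S hS
    simp only [hφ]
    simp [hzk S hS, hptz S hS]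
  have hφw : ∀ S ∈ Q, (φ (zw S).2).val = k + 2 * J S + 1 := by
    intro S hS
    simp only [hφ]
    simp [hwk S hS, hptw S hS, Ne.symm (hzw S hS)]
  have hφk : ∀ i : Fin n, i.val < k → φ i = i := by
    intro i hi
    simp only [hφ]
    rw [if_pos hi]
  have hkD : ∀ i : Fin n, i.val < k → i ∈ D := by
    intro i hi
    rw [hD]
    exact mem_union_left _ (by simp [hi])
  have hzD : ∀ S ∈ Q, (zw S).1 ∈ D := by
    intro S hS
    rw [hD]
    exact mem_union_right _ (mem_biUnion.mpr ⟨S, hS, by simp⟩)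
  have hwD : ∀ S ∈ Q, (zw S).2 ∈ D := by
    intro S hS
    rw [hD]
    exact mem_union_right _ (mem_biUnion.mpr ⟨S, hS, by simp⟩)
  -- description of φ on D
  have key : ∀ x ∈ D, (x.val < k ∧ φ x = x) ∨
      (∃ S ∈ Q, (x = (zw S).1 ∧ (φ x).val = k + 2*J S) ∨ (x = (zw S).2 ∧ (φ x).val = k + 2*J S + 1)) := by
    intro x hx
    rw [hD] at hx
    rcases mem_union.mp hx with hx | hx
    · left
      simp only [mem_filter, mem_univ, true_and] at hx
      exact ⟨hx, hφk x hx⟩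
    · right
      obtain ⟨S, hS, hxS⟩ := mem_biUnion.mp hx
      simp only [mem_insert, mem_singleton] at hxS
      rcases hxS with h | h
      · exact ⟨S, hS, Or.inl ⟨h, h ▸ hφz S hS⟩⟩
      · exact ⟨S, hS, Or.inr ⟨h, h ▸ hφw S hS⟩⟩
  have hφinj : Set.InjOn φ D := by
    intro a ha b hb hab
    rcases key a ha with ⟨hak, haφ⟩ | ⟨S, hS, hcase⟩ <;>
      rcases key b hb with ⟨hbk, hbφ⟩ | ⟨T, hT, hcase'⟩
    · rw [haφ, hbφ] at hab; exact hab
    · exfalso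
      have h1 : (φ a).val < k := by rw [haφ]; exact hak
      rcases hcase' with ⟨_, h2⟩ | ⟨_, h2⟩ <;> (rw [hab] at h1; omega)
    · exfalso
      have h1 : (φ b).val < k := by rw [hbφ]; exact hbk
      rcases hcase with ⟨_, h2⟩ | ⟨_, h2⟩ <;> (rw [← hab] at h1; omega)
    · have hval : (φ a).val = (φ b).val := by rw [hab]
      rcases hcase with ⟨h1, h2⟩ | ⟨h1, h2⟩ <;> rcases hcase' with ⟨h3, h4⟩ | ⟨h3, h4⟩ <;>
        rw [h2, h4] at hval
      · have : S = T := hJinj S hS T hT (by omega)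
        rw [h1, h3, this]
      · omega
      · omega
      · have : S = T := hJinj S hS T hT (by omega)
        rw [h1, h3, this]
  obtain ⟨σ, hσD, hσout⟩ := exists_perm_extend D φ hφinj
  -- cardinality of D and its image
  have hpairdisj : ∀ S ∈ Q, ∀ T ∈ Q, S ≠ T →
      Disjoint ({(zw S).1, (zw S).2} : Finset (Fin n)) {(zw T).1, (zw T).2} := by
    intro S hS T hT hne
    apply Finset.disjoint_left.mpr
    intro x hxS hxT
    simp only [mem_insert, mem_singleton] at hxS hxT
    have hxS' : x ∈ S := by rcases hxS with h | h <;> rw [h] <;> [exact hz S hS; exact hw S hS]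
    have hxT' : x ∈ T := by rcases hxT with h | h <;> rw [h] <;> [exact hz T hT; exact hw T hT]
    exact Finset.disjoint_left.mp (hQdisj S hS T hT hne) hxS' hxT'
  have hDcard : D.card = k + 2*(s+1) := by
    rw [hD]
    rw [Finset.card_union_of_disjoint]
    · rw [card_filter_val_lt (by omega : k ≤ n)]
      rw [Finset.card_biUnion]
      · have : ∀ S ∈ Q, ({(zw S).1, (zw S).2} : Finset (Fin n)).card = 2 := by
          intro S hS
          exact Finset.card_pair (hzw S hS)
        rw [Finset.sum_congr rfl this, Finset.sum_const, hQcard]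
        ring
      · exact hpairdisj
    · apply Finset.disjoint_left.mpr
      intro x hx1 hx2
      simp only [mem_filter, mem_univ, true_and] at hx1
      obtain ⟨S, hS, hxS⟩ := mem_biUnion.mp hx2
      simp only [mem_insert, mem_singleton] at hxS
      have : x ∈ S := by rcases hxS with h | h <;> rw [h] <;> [exact hz S hS; exact hw S hS]
      have := hSk S hS x this
      omega
  have hEeq : D.image φ = univ.filter (fun j : Fin n => j.val < k + 2*s + 2) := by
    apply Finset.eq_of_subset_of_card_le
    · intro y hy
      obtain ⟨x, hx, hxy⟩ := mem_image.mp hy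
      simp only [mem_filter, mem_univ, true_and]
      rcases key x hx with ⟨hxk, hxφ⟩ | ⟨S, hS, hcase⟩
      · rw [← hxy, hxφ]; omega
      · have := hJle S
        rcases hcase with ⟨_, h2⟩ | ⟨_, h2⟩ <;> (rw [← hxy]; omega)
    · rw [card_filter_val_lt (by omega : k + 2*s + 2 ≤ n)]
      rw [Finset.card_image_of_injOn hφinj, hDcard]
      omega
  have hσout' : ∀ x : Fin n, x ∉ D → k + 2*s + 2 ≤ (σ x).val := by
    intro x hx
    have h1 := hσout x hx
    rw [hEeq] at h1
    simp only [mem_filter, mem_univ, true_and] at h1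
    omega
  have hσk : ∀ i : Fin n, i.val < k → σ i = i := by
    intro i hi
    rw [hσD i (hkD i hi)]
    exact hφk i hi
  have hσz : ∀ S ∈ Q, (σ (zw S).1).val = k + 2*J S := by
    intro S hS
    rw [hσD _ (hzD S hS)]
    exact hφz S hS
  have hσw : ∀ S ∈ Q, (σ (zw S).2).val = k + 2*J S + 1 := by
    intro S hS
    rw [hσD _ (hwD S hS)]
    exact hφw S hS
  -- the geodesic
  refine ⟨fun j ℓ => state x0 σ j.val ℓ, ⟨σ, ?_⟩, ?_⟩
  · intro j ℓ
    by_cases hσj : σ ℓ = j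
    · have hv : (σ ℓ).val = j.val := by rw [hσj]
      simp [state, Fin.val_succ, Fin.coe_castSucc, hσj, hv]
    · have hv : (σ ℓ).val ≠ j.val := fun hcon => hσj (Fin.ext hcon)
      have h2 : ((σ ℓ).val < j.val + 1) ↔ ((σ ℓ).val < j.val) := by omega
      simp only [state, Fin.val_succ, Fin.coe_castSucc, if_neg hσj]
      rcases Nat.lt_or_ge (σ ℓ).val j.val with hlt | hge
      · simp [hlt, Nat.lt_succ_of_lt hlt]
      · have hg1 : ¬ (σ ℓ).val < j.val := by omega
        have hg2 : ¬ (σ ℓ).val < j.val + 1 := by omega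
        simp [hg1, hg2]
  -- counting the jumps
  have hstatek : ∀ (m : ℕ) (i : Fin n), i.val < k →
      (state x0 σ m i = true ↔ ((i.val < m ∧ i.val % 2 = 0) ∨ (m ≤ i.val ∧ i.val % 2 = 1))) := by
    intro m i hik
    simp only [state, hσk i hik, hx0, if_pos hik]
    by_cases h1 : i.val < m <;> by_cases h2 : i.val % 2 = 1 <;> simp [h1, h2] <;> omega
  have hfo : ∀ m : ℕ, firstOnes k (state x0 σ m) = k/2 + (min m k) % 2 := by
    intro m
    unfold firstOnes
    rw [← count_arith k m]
    apply Finset.card_bij (fun i _ => i.val)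
    · intro i hi
      simp only [mem_filter, mem_univ, true_and] at hi
      simp only [Finset.mem_filter, Finset.mem_range]
      exact ⟨hi.1, (hstatek m i hi.1).mp hi.2⟩
    · intro a _ b _ hab
      exact Fin.ext hab
    · intro b hb
      simp only [Finset.mem_filter, Finset.mem_range] at hb
      refine ⟨⟨b, by omega⟩, ?_, rfl⟩
      simp only [mem_filter, mem_univ, true_and]
      exact ⟨hb.1, (hstatek m ⟨b, by omega⟩ hb.1).mpr hb.2⟩
  have hzstate : ∀ S ∈ Q, ∀ m : ℕ, (state x0 σ m (zw S).1 = false ↔ k + 2 * J S < m) := by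
    intro S hS m
    simp only [state, hσz S hS, hx0, if_neg (hzk S hS), hptz S hS]
    by_cases h1 : k + 2 * J S < m <;> simp [h1]
  have hwstate : ∀ S ∈ Q, ∀ m : ℕ, (state x0 σ m (zw S).2 = false ↔ m ≤ k + 2 * J S + 1) := by
    intro S hS m
    simp only [state, hσw S hS, hx0, if_neg (hwk S hS), hptw S hS]
    by_cases h1 : k + 2 * J S + 1 < m <;> simp [h1, Ne.symm (hzw S hS)] <;> omega
  have hothermem : ∀ S ∈ Q, ∀ i ∈ S, i ≠ (zw S).1 → i ≠ (zw S).2 → i ∉ D := by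
    intro S hS i hiS hne1 hne2 hiD
    rw [hD] at hiD
    rcases mem_union.mp hiD with h | h
    · simp only [mem_filter, mem_univ, true_and] at h
      have := hSk S hS i hiS
      omega
    · obtain ⟨T, hT, hiT⟩ := mem_biUnion.mp h
      simp only [mem_insert, mem_singleton] at hiT
      have hiT' : i ∈ T := by rcases hiT with h' | h' <;> rw [h'] <;> [exact hz T hT; exact hw T hT]
      have hTS : T = S := by
        have h1 := hptu S hS i hiS
        have h2 := hptu T hT i hiT'
        rw [← h1, h2]
      subst hTS
      rcases hiT with h' | h'
      · exact hne1 h'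
      · exact hne2 h'
  have hostate : ∀ S ∈ Q, ∀ i ∈ S, i ≠ (zw S).1 → i ≠ (zw S).2 →
      ∀ m : ℕ, m ≤ k + 2*s + 2 → state x0 σ m i = false := by
    intro S hS i hiS hne1 hne2 m hm
    have hiD := hothermem S hS i hiS hne1 hne2
    have h1 := hσout' i hiD
    have hik : ¬ i.val < k := by have := hSk S hS i hiS; omega
    simp only [state, hx0]
    rw [if_neg (by omega : ¬ (σ i).val < m), if_neg hik]
    rw [hptu S hS i hiS]
    simp [hne1]
  have hA0iff : ∀ m : ℕ, m ≤ k + 2*s + 2 →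
      ((∃ S ∈ Q, ∀ i ∈ S, state x0 σ m i = false) ↔ (k < m ∧ (m - k) % 2 = 1)) := by
    intro m hm
    constructor
    · rintro ⟨S, hS, hall⟩
      have h1 := (hzstate S hS m).mp (hall _ (hz S hS))
      have h2 := (hwstate S hS m).mp (hall _ (hw S hS))
      omega
    · rintro ⟨h1, h2⟩
      obtain ⟨S, hS, hJS⟩ := hJsurj ((m - k - 1) / 2) (by omega)
      refine ⟨S, hS, ?_⟩
      intro i hiS
      by_cases he1 : i = (zw S).1
      · rw [he1, hzstate S hS m]
        omega
      · by_cases he2 : i = (zw S).2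
        · rw [he2, hwstate S hS m]
          omega
        · exact hostate S hS i hiS he1 he2 m hm
  have hA1iff : ∀ m : ℕ, m ≤ k + 2*s + 2 → ¬ (∃ S ∈ Q, ∀ i ∈ S, state x0 σ m i = true) := by
    rintro m hm ⟨S, hS, hall⟩
    have h1 : state x0 σ m (zw S).1 = true := hall _ (hz S hS)
    have h2 : state x0 σ m (zw S).2 = true := hall _ (hw S hS)
    have h3 : ¬ (k + 2 * J S < m) := by
      intro hcon
      have := (hzstate S hS m).mpr hcon
      rw [h1] at this
      exact absurd this (by simp)
    have h4 : ¬ (m ≤ k + 2 * J S + 1) := by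
      intro hcon
      have := (hwstate S hS m).mpr hcon
      rw [h2] at this
      exact absurd this (by simp)
    omega
  have hmain : ∀ m : ℕ, m ≤ k + 2*s + 2 → bCol k Q (state x0 σ m) = decide (m % 2 = 1) := by
    intro m hm
    rw [bCol_eq]
    have hfo' := hfo m
    by_cases hmk : m ≤ k
    · have hA0 : ¬ (∃ S ∈ Q, ∀ i ∈ S, state x0 σ m i = false) := by
        rw [hA0iff m hm]
        omega
      have hA1 := hA1iff m hm
      by_cases hpar : m % 2 = 1
      · have hmaj : k < 2 * firstOnes k (state x0 σ m) := by rw [hfo']; omega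
        simp [hmaj, hA0, hpar]
      · have hmaj : ¬ k < 2 * firstOnes k (state x0 σ m) := by rw [hfo']; omega
        simp [hmaj, hA1, hpar]
    · have hmaj : k < 2 * firstOnes k (state x0 σ m) := by rw [hfo']; omega
      by_cases hpar : m % 2 = 1
      · have hA0 : ¬ (∃ S ∈ Q, ∀ i ∈ S, state x0 σ m i = false) := by
          rw [hA0iff m hm]
          omega
        simp [hmaj, hA0, hpar]
      · have hA0 : (∃ S ∈ Q, ∀ i ∈ S, state x0 σ m i = false) := by
          rw [hA0iff m hm]
          omega
        simp [hmaj, hA0, hpar]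
  have hjump : ∀ j : Fin n, j.val < k + 2*s + 2 →
      bCol k Q (state x0 σ (j.val+1)) ≠ bCol k Q (state x0 σ j.val) := by
    intro j hj
    rw [hmain (j.val+1) (by omega), hmain j.val (by omega)]
    by_cases h : j.val % 2 = 1
    · have h2 : ¬ (j.val+1) % 2 = 1 := by omega
      simp [h, h2]
    · have h2 : (j.val+1) % 2 = 1 := by omega
      simp [h, h2]
  calc k + 2*s + 2 = (univ.filter fun j : Fin n => j.val < k + 2*s+2).card :=
        (card_filter_val_lt (by omega)).symm
    _ ≤ jumps (bCol k Q) (fun j ℓ => state x0 σ j.val ℓ) := by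
        unfold jumps
        apply card_le_card
        intro j hj
        simp only [mem_filter, mem_univ, true_and] at hj ⊢
        exact hjump j hj

/-- For `k` odd positive, `t = s + (k+1)/2`, `n ≥ (s+1)(t+1)+k`, and `Q` a partition
of the last `n-k` indices into `s+1` sets of size at least `t+1`, the instability of
`b_t^k(Q)` equals `2t+1`. -/
theorem inst_bCol_eq (n k s t : ℕ) (hodd : Odd k) (hk : 0 < k)
    (ht : t = s + (k + 1) / 2) (hn : (s + 1) * (t + 1) + k ≤ n)
    (Q : Finset (Finset (Fin n))) (hQcard : Q.card = s + 1)
    (hQsize : ∀ S ∈ Q, t + 1 ≤ S.card)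
    (hQdisj : ∀ S ∈ Q, ∀ T ∈ Q, S ≠ T → Disjoint S T)
    (hQcover : Q.biUnion id = univ.filter fun i : Fin n => k ≤ i.val) :
    inst (bCol k Q) = 2 * t + 1 := by
  classical
  obtain ⟨c, hc⟩ := hodd
  have h2t : 2*t + 1 = k + 2*s + 2 := by omega
  have hub : ∀ m ∈ {m | ∃ P : Fin (n+1) → Fin n → Bool,
      IsGeodesic P ∧ m = jumps (bCol k Q) P}, m ≤ 2*t+1 := by
    rintro m ⟨P, ⟨σ, hσ⟩, rfl⟩
    have := jumps_le_bound (k := k) Q hQcard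
      (fun S hS => Finset.card_pos.mp (lt_of_lt_of_le (by omega) (hQsize S hS))) σ hσ
    omega
  obtain ⟨P, hPgeo, hPge⟩ := exists_geodesic_max ⟨c, hc⟩ hk ht hn Q hQcard hQsize hQdisj hQcover
  have hPle : jumps (bCol k Q) P ≤ 2*t+1 := hub _ ⟨P, hPgeo, rfl⟩
  have hPeq : jumps (bCol k Q) P = 2*t+1 := by omega
  have hmem : 2*t+1 ∈ {m | ∃ P' : Fin (n+1) → Fin n → Bool,
      IsGeodesic P' ∧ m = jumps (bCol k Q) P'} := ⟨P, hPgeo, hPeq.symm⟩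
  unfold inst
  apply le_antisymm
  · exact csSup_le ⟨_, hmem⟩ hub
  · exact le_csSup ⟨2*t+1, fun m hm => hub m hm⟩ hmem
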